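/- (Lemma 2, derivative of the matrices S_a.) Fix Q, E ∈ ℝ^{n×n} and indices 0 ≤ a ≤ i ≤ N, and regard S_a as a function of δ ∈ ℝ^{N+1} through the defining formulas (so that Φ and each M_q depend on δ). Then the partial derivative of S_a with respect to δ_i exists at every δ with nonnegative entries and equals Φ(i+1, a)ᵀ C_i Φ(i+1, a), where C_i = Q + A_iᵀ S_{i+1} + S_{i+1} A_i and Φ(i+1, a), S_{i+1} are evaluated at δ. -/

import Mathlib

open Matrix

/-- Matrix exponential of a real square matrix. -/
noncomputable def expM {n : ℕ} (A : Matrix (Fin n) (Fin n) ℝ) : Matrix (Fin n) (Fin n) ℝ :=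
  NormedSpace.exp A

/-- Switching times: `tau δ i = ∑_{j<i} δ j`. -/
noncomputable def tau (δ : ℕ → ℝ) (i : ℕ) : ℝ := ∑ j ∈ Finset.range i, δ j

/-- State transition matrix `Φ(l, i) = exp(δ_{l-1} A_{l-1}) ⋯ exp(δ_i A_i)`
(ordered product, larger indices on the left; `Φ(i,i) = 1`). -/
noncomputable def Phi {n : ℕ} (A : ℕ → Matrix (Fin n) (Fin n) ℝ) (δ : ℕ → ℝ)
    (l i : ℕ) : Matrix (Fin n) (Fin n) ℝ :=
  (((List.range (l - i)).reverse).map (fun p => expM (δ (i + p) • A (i + p)))).prod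

/-- `M_q = ∫_0^{δ_q} exp(η A_q)ᵀ Q exp(η A_q) dη`, taken entrywise. -/
noncomputable def Mmat {n : ℕ} (A : ℕ → Matrix (Fin n) (Fin n) ℝ) (δ : ℕ → ℝ)
    (Q : Matrix (Fin n) (Fin n) ℝ) (q : ℕ) : Matrix (Fin n) (Fin n) ℝ :=
  Matrix.of fun k l => ∫ η in (0:ℝ)..δ q, ((expM (η • A q))ᵀ * Q * expM (η • A q)) k l

/-- `P_a = ∑_{q=a}^N Φ(q,a)ᵀ M_q Φ(q,a)`. -/
noncomputable def Pmat {n : ℕ} (N : ℕ) (A : ℕ → Matrix (Fin n) (Fin n) ℝ) (δ : ℕ → ℝ)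
    (Q : Matrix (Fin n) (Fin n) ℝ) (a : ℕ) : Matrix (Fin n) (Fin n) ℝ :=
  ∑ q ∈ Finset.Icc a N, (Phi A δ q a)ᵀ * Mmat A δ Q q * Phi A δ q a

/-- `F_a = Φ(N+1,a)ᵀ E Φ(N+1,a)`. -/
noncomputable def Fmat {n : ℕ} (N : ℕ) (A : ℕ → Matrix (Fin n) (Fin n) ℝ) (δ : ℕ → ℝ)
    (E : Matrix (Fin n) (Fin n) ℝ) (a : ℕ) : Matrix (Fin n) (Fin n) ℝ :=
  (Phi A δ (N + 1) a)ᵀ * E * Phi A δ (N + 1) a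

/-- `S_a = P_a + F_a`. -/
noncomputable def Smat {n : ℕ} (N : ℕ) (A : ℕ → Matrix (Fin n) (Fin n) ℝ) (δ : ℕ → ℝ)
    (Q E : Matrix (Fin n) (Fin n) ℝ) (a : ℕ) : Matrix (Fin n) (Fin n) ℝ :=
  Pmat N A δ Q a + Fmat N A δ E a

/-- A trajectory of the switched system: continuous on `[0, τ_{N+1}]`, starting at `x0`,
satisfying `x' = A_i x` on each open interval `(τ_i, τ_{i+1})`. -/
def IsTrajectory {n : ℕ} (N : ℕ) (A : ℕ → Matrix (Fin n) (Fin n) ℝ) (δ : ℕ → ℝ)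
    (x0 : Fin n → ℝ) (x : ℝ → Fin n → ℝ) : Prop :=
  ContinuousOn x (Set.Icc 0 (tau δ (N + 1))) ∧ x 0 = x0 ∧
    ∀ i ≤ N, ∀ t ∈ Set.Ioo (tau δ i) (tau δ (i + 1)),
      HasDerivAt x ((A i).mulVec (x t)) t

section ExpHelpers
attribute [local instance] Matrix.linftyOpNormedRing Matrix.linftyOpNormedAlgebra
variable {n : ℕ}

lemma hasDerivAt_expM_entry (B : Matrix (Fin n) (Fin n) ℝ) (t : ℝ) (k l : Fin n) :
    HasDerivAt (fun s : ℝ => expM (s • B) k l) ((B * expM (t • B)) k l) t := by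
  have h := hasDerivAt_exp_smul_const' (𝕂 := ℝ) B t
  have h2 := ((LinearMap.toContinuousLinearMap
      (Matrix.entryLinearMap ℝ ℝ k l))).hasFDerivAt.comp_hasDerivAt t h
  exact h2

lemma continuous_expM_entry (B : Matrix (Fin n) (Fin n) ℝ) (k l : Fin n) :
    Continuous fun s : ℝ => expM (s • B) k l :=
  continuous_iff_continuousAt.2 fun t => (hasDerivAt_expM_entry B t k l).continuousAt
end ExpHelpers

lemma continuous_integrand {n : ℕ} (B Q : Matrix (Fin n) (Fin n) ℝ) (k l : Fin n) :
    Continuous fun η : ℝ => ((expM (η • B))ᵀ * Q * expM (η • B)) k l := by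
  simp only [Matrix.mul_apply, Matrix.transpose_apply]
  refine continuous_finset_sum _ fun j _ => Continuous.mul ?_ (continuous_expM_entry B j l)
  exact continuous_finset_sum _ fun u _ =>
    ((continuous_expM_entry B u k).mul continuous_const)

lemma hasDerivAt_integral_entry {n : ℕ} (B Q : Matrix (Fin n) (Fin n) ℝ) (c : ℝ) (k l : Fin n) :
    HasDerivAt (fun s : ℝ => ∫ η in (0:ℝ)..s, ((expM (η • B))ᵀ * Q * expM (η • B)) k l)
      (((expM (c • B))ᵀ * Q * expM (c • B)) k l) c := by
  have hc := continuous_integrand B Q k l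
  exact intervalIntegral.integral_hasDerivAt_right (hc.intervalIntegrable _ _)
    (hc.stronglyMeasurableAtFilter _ _) hc.continuousAt

lemma Phi_congr {n : ℕ} (A : ℕ → Matrix (Fin n) (Fin n) ℝ) {δ δ' : ℕ → ℝ} (l a : ℕ)
    (h : ∀ p, a ≤ p → p < l → δ p = δ' p) : Phi A δ l a = Phi A δ' l a := by
  unfold Phi
  congr 1
  refine List.map_congr_left fun p hp => ?_
  rw [List.mem_reverse, List.mem_range] at hp
  rw [h (a + p) (Nat.le_add_right _ _) (by omega)]

lemma Phi_succ {n : ℕ} (A : ℕ → Matrix (Fin n) (Fin n) ℝ) (δ : ℕ → ℝ) (m : ℕ) :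
    Phi A δ (m + 1) m = expM (δ m • A m) := by
  have h : m + 1 - m = 1 := by omega
  simp [Phi, h, List.range_succ]

lemma Phi_split {n : ℕ} (A : ℕ → Matrix (Fin n) (Fin n) ℝ) (δ : ℕ → ℝ) {a m l : ℕ}
    (h1 : a ≤ m) (h2 : m ≤ l) : Phi A δ l a = Phi A δ l m * Phi A δ m a := by
  unfold Phi
  have hl : l - a = (m - a) + (l - m) := by omega
  rw [hl, List.range_add, List.reverse_append, List.map_append, List.prod_append]
  simp only [List.map_reverse, List.map_map]
  congr 3
  refine List.map_congr_left fun p hp => ?_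
  have : a + (m - a + p) = m + p := by omega
  simp only [Function.comp_apply, this]

lemma Smat_update {n N : ℕ} (A : ℕ → Matrix (Fin n) (Fin n) ℝ) (δ : ℕ → ℝ)
    (Q E : Matrix (Fin n) (Fin n) ℝ) {a i : ℕ} (hai : a ≤ i) (hiN : i ≤ N) (s : ℝ) :
    Smat N A (Function.update δ i s) Q E a
      = (∑ q ∈ Finset.Ico a i, (Phi A δ q a)ᵀ * Mmat A δ Q q * Phi A δ q a)
        + (Phi A δ i a)ᵀ *
            (Mmat A (Function.update δ i s) Q i
              + (expM (s • A i))ᵀ * Smat N A δ Q E (i + 1) * expM (s • A i)) *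
            Phi A δ i a := by
  set δ' := Function.update δ i s with hd
  have hup : ∀ p, p ≠ i → δ' p = δ p := fun p hp => Function.update_of_ne hp _ _
  have hPhi_low : ∀ q, q ≤ i → Phi A δ' q a = Phi A δ q a := fun q hq =>
    Phi_congr A q a fun p hp1 hp2 => hup p (by omega)
  have hPhi_high : ∀ q, Phi A δ' q (i + 1) = Phi A δ q (i + 1) := fun q =>
    Phi_congr A q (i + 1) fun p hp1 hp2 => hup p (by omega)
  have hMq : ∀ q, q ≠ i → Mmat A δ' Q q = Mmat A δ Q q := by
    intro q hq
    simp only [Mmat, hup q hq]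
  have hsplit : ∀ q, i + 1 ≤ q →
      Phi A δ' q a = Phi A δ q (i + 1) * (expM (s • A i) * Phi A δ i a) := by
    intro q hq
    rw [Phi_split A δ' (show a ≤ i + 1 by omega) hq,
      Phi_split A δ' (show a ≤ i by omega) (show i ≤ i + 1 by omega),
      Phi_succ, hPhi_low i le_rfl, hPhi_high q, hd]
    simp [mul_assoc]
  have haN : a ≤ N := le_trans hai hiN
  have hS1 : ∑ q ∈ Finset.Ico a i, (Phi A δ' q a)ᵀ * Mmat A δ' Q q * Phi A δ' q a
      = ∑ q ∈ Finset.Ico a i, (Phi A δ q a)ᵀ * Mmat A δ Q q * Phi A δ q a :=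
    Finset.sum_congr rfl fun q hq => by
      have hqi : q < i := (Finset.mem_Ico.1 hq).2
      rw [hPhi_low q (le_of_lt hqi), hMq q (by omega)]
  have hS2 : ∑ q ∈ Finset.Icc (i + 1) N, (Phi A δ' q a)ᵀ * Mmat A δ' Q q * Phi A δ' q a
      = (expM (s • A i) * Phi A δ i a)ᵀ *
          (∑ q ∈ Finset.Icc (i + 1) N,
            (Phi A δ q (i + 1))ᵀ * Mmat A δ Q q * Phi A δ q (i + 1)) *
          (expM (s • A i) * Phi A δ i a) := by
    rw [Finset.mul_sum, Finset.sum_mul]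
    refine Finset.sum_congr rfl fun q hq => ?_
    have hq1 : i + 1 ≤ q := (Finset.mem_Icc.1 hq).1
    rw [hsplit q hq1, hMq q (by omega)]
    simp [Matrix.transpose_mul, mul_assoc]
  have hS3 : (Phi A δ' (N + 1) a)ᵀ * E * Phi A δ' (N + 1) a
      = (expM (s • A i) * Phi A δ i a)ᵀ *
          ((Phi A δ (N + 1) (i + 1))ᵀ * E * Phi A δ (N + 1) (i + 1)) *
          (expM (s • A i) * Phi A δ i a) := by
    rw [hsplit (N + 1) (by omega)]
    simp [Matrix.transpose_mul, mul_assoc]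
  simp only [Smat, Pmat, Fmat]
  rw [show Finset.Icc a N = Finset.Ico a i ∪ Finset.Icc i N by
      rw [← Finset.Ico_add_one_right_eq_Icc, ← Finset.Ico_union_Ico_eq_Ico hai (by omega), Finset.Ico_add_one_right_eq_Icc],
    Finset.sum_union (by simp [Finset.disjoint_left]; omega),
    Finset.Icc_eq_cons_Ioc hiN, Finset.sum_cons, ← Finset.Icc_add_one_left_eq_Ioc,
    hS1, hS2, hS3, hPhi_low i le_rfl]
  simp only [Matrix.transpose_mul, mul_add, add_mul, mul_assoc]
  abel

lemma conj_entry {n : ℕ} (P X R : Matrix (Fin n) (Fin n) ℝ) (k l : Fin n) :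
    (Pᵀ * X * R) k l = ∑ p, ∑ r, P p k * X p r * R r l := by
  simp only [Matrix.mul_apply, Matrix.transpose_apply, Finset.sum_mul]
  rw [Finset.sum_comm]

/-- Lemma 2: the partial derivative of `S_a` with respect to `δ_i` exists
(entrywise) at every nonnegative `δ` and equals `Φ(i+1,a)ᵀ C_i Φ(i+1,a)` with
`C_i = Q + A_iᵀ S_{i+1} + S_{i+1} A_i`. -/
theorem stmt6 {n N : ℕ} (A : ℕ → Matrix (Fin n) (Fin n) ℝ) (δ : ℕ → ℝ)
    (hδ : ∀ q ≤ N, 0 ≤ δ q) (Q E : Matrix (Fin n) (Fin n) ℝ)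
    (a i : ℕ) (hai : a ≤ i) (hiN : i ≤ N) :
    ∀ k l : Fin n,
      HasDerivAt (fun s : ℝ => Smat N A (Function.update δ i s) Q E a k l)
        (((Phi A δ (i + 1) a)ᵀ *
            (Q + (A i)ᵀ * Smat N A δ Q E (i + 1) + Smat N A δ Q E (i + 1) * A i) *
            Phi A δ (i + 1) a) k l) (δ i) := by
  intro k l
  set e0 := expM (δ i • A i) with he0
  set S := Smat N A δ Q E (i + 1) with hSdef
  set Φ := Phi A δ i a with hΦ
  have hfun : (fun s : ℝ => Smat N A (Function.update δ i s) Q E a k l)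
      = fun s : ℝ =>
        (∑ q ∈ Finset.Ico a i, (Phi A δ q a)ᵀ * Mmat A δ Q q * Phi A δ q a) k l
        + ∑ p, ∑ r, Φ p k *
            ((∫ η in (0:ℝ)..s, ((expM (η • A i))ᵀ * Q * expM (η • A i)) p r)
              + ∑ u, ∑ v, expM (s • A i) u p * S u v * expM (s • A i) v r) * Φ r l := by
    funext s
    rw [Smat_update A δ Q E hai hiN s, Matrix.add_apply, conj_entry]
    congr 1
    refine Finset.sum_congr rfl fun p _ => Finset.sum_congr rfl fun r _ => ?_
    congr 2
    rw [Matrix.add_apply, conj_entry]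
    congr 1
    simp [Mmat]
  have hDer : ∀ p r : Fin n, HasDerivAt (fun s : ℝ =>
      (∫ η in (0:ℝ)..s, ((expM (η • A i))ᵀ * Q * expM (η • A i)) p r)
        + ∑ u, ∑ v, expM (s • A i) u p * S u v * expM (s • A i) v r)
      ((e0ᵀ * Q * e0 + ((A i * e0)ᵀ * S * e0 + e0ᵀ * S * (A i * e0))) p r) (δ i) := by
    intro p r
    have h1 := hasDerivAt_integral_entry (A i) Q (δ i) p r
    have h2 : HasDerivAt (fun s : ℝ =>
        ∑ u, ∑ v, expM (s • A i) u p * S u v * expM (s • A i) v r)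
        (((A i * e0)ᵀ * S * e0 + e0ᵀ * S * (A i * e0)) p r) (δ i) := by
      have key : ∀ u v : Fin n, HasDerivAt
          (fun s : ℝ => expM (s • A i) u p * S u v * expM (s • A i) v r)
          ((A i * e0) u p * S u v * e0 v r + e0 u p * S u v * (A i * e0) v r) (δ i) := by
        intro u v
        have hu := (hasDerivAt_expM_entry (A i) (δ i) u p).mul_const (S u v)
        exact hu.mul (hasDerivAt_expM_entry (A i) (δ i) v r)
      have hsum := HasDerivAt.fun_sum (u := Finset.univ) fun u _ =>
        HasDerivAt.fun_sum (u := Finset.univ) fun v _ => key u v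
      convert hsum using 1
      · rfl
      · rfl
      rw [Matrix.add_apply, conj_entry, conj_entry, ← Finset.sum_add_distrib]
      refine Finset.sum_congr rfl fun u _ => ?_
      rw [← Finset.sum_add_distrib]
    have := h1.add h2
    rw [← Matrix.add_apply] at this
    exact this
  have hmain : HasDerivAt
      (fun s : ℝ =>
        (∑ q ∈ Finset.Ico a i, (Phi A δ q a)ᵀ * Mmat A δ Q q * Phi A δ q a) k l
        + ∑ p, ∑ r, Φ p k *
            ((∫ η in (0:ℝ)..s, ((expM (η • A i))ᵀ * Q * expM (η • A i)) p r)
              + ∑ u, ∑ v, expM (s • A i) u p * S u v * expM (s • A i) v r) * Φ r l)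
      (∑ p, ∑ r, Φ p k *
          ((e0ᵀ * Q * e0 + ((A i * e0)ᵀ * S * e0 + e0ᵀ * S * (A i * e0))) p r) * Φ r l)
      (δ i) :=
    HasDerivAt.const_add _ (HasDerivAt.fun_sum fun p _ =>
      HasDerivAt.fun_sum fun r _ => ((hDer p r).const_mul _).mul_const _)
  rw [hfun]
  convert hmain using 1
  rw [← conj_entry]
  have hPhi1 : Phi A δ (i + 1) a = e0 * Φ := by
    rw [Phi_split A δ hai (Nat.le_succ i), Phi_succ]
  rw [hPhi1]
  have : (e0 * Φ)ᵀ * (Q + (A i)ᵀ * S + S * A i) * (e0 * Φ)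
      = Φᵀ * (e0ᵀ * Q * e0 + ((A i * e0)ᵀ * S * e0 + e0ᵀ * S * (A i * e0))) * Φ := by
    simp only [Matrix.transpose_mul, mul_add, add_mul, mul_assoc]
    abel
  rw [this]
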